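/- arXiv:1703.02326 — 3 statements merged into one kernel-verified Lean document; each statement's English description precedes it below -/
import Mathlib

section
/- Let W be a symmetric positive definite n×n matrix and let S_c (n×k) and S_nc (n×m) be full column-rank matrices. Define W_nc = W - α_c · W S_c (S_cᵀ W S_c)⁻¹ S_cᵀ W with α_c ∈ {0,1}. For torques τ = W_nc S_nc (S_ncᵀ W_nc S_nc)⁻¹ τ_nc (assuming S_ncᵀ W_nc S_nc invertible), if α_c = 1 then S_cᵀ τ = 0, i.e., the non-contact control input does not affect the contact subsystem. -/
open Matrix

theorem noncontact_input_decoupled_from_contact {n k m : ℕ}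
    (W : Matrix (Fin n) (Fin n) ℝ)
    (Sc : Matrix (Fin n) (Fin k) ℝ) (Snc : Matrix (Fin n) (Fin m) ℝ)
    (hW : W.PosDef) (hWsym : W.IsSymm)
    (hSc : IsUnit (Scᵀ * W * Sc))
    (Wnc : Matrix (Fin n) (Fin n) ℝ)
    (hWnc : Wnc = W - W * Sc * (Scᵀ * W * Sc)⁻¹ * Scᵀ * W)
    (hSnc : IsUnit (Sncᵀ * Wnc * Snc))
    (τnc : Fin m → ℝ) :
    Scᵀ.mulVec ((Wnc * Snc * (Sncᵀ * Wnc * Snc)⁻¹).mulVec τnc) = 0 := by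
  have h0 : Scᵀ * Wnc = 0 := by
    rw [hWnc, Matrix.mul_sub]
    have : Scᵀ * (W * Sc * (Scᵀ * W * Sc)⁻¹ * Scᵀ * W)
        = (Scᵀ * W * Sc) * (Scᵀ * W * Sc)⁻¹ * (Scᵀ * W) := by
      simp [Matrix.mul_assoc]
    rw [this, Matrix.mul_nonsing_inv _ ((Matrix.isUnit_iff_isUnit_det _).mp hSc),
      Matrix.one_mul, sub_self]
  rw [Matrix.mulVec_mulVec, Matrix.mul_assoc, Matrix.mul_assoc, ← Matrix.mul_assoc Scᵀ,
    h0, Matrix.zero_mul, Matrix.zero_mulVec]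
end

section
/- Let W be symmetric positive definite, S_c, S_nc full column-rank matrices with S_cᵀ W S_c, S_ncᵀ W S_nc invertible, and define W_c = W - W S_nc (S_ncᵀ W S_nc)⁻¹ S_ncᵀ W and W_nc = W - W S_c (S_cᵀ W S_c)⁻¹ S_cᵀ W (coequal case α_c = α_nc = 1). Assume S_cᵀ W_c S_c and S_ncᵀ W_nc S_nc are invertible. Then for τ = W_c S_c (S_cᵀ W_c S_c)⁻¹ τ_c + W_nc S_nc (S_ncᵀ W_nc S_nc)⁻¹ τ_nc, it holds that S_cᵀ τ = τ_c and S_ncᵀ τ = τ_nc for all vectors τ_c, τ_nc. -/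
open Matrix

theorem coequal_task_decomposition {n k m : ℕ}
    (W : Matrix (Fin n) (Fin n) ℝ)
    (Sc : Matrix (Fin n) (Fin k) ℝ) (Snc : Matrix (Fin n) (Fin m) ℝ)
    (hW : W.PosDef) (hWsym : W.IsSymm)
    (hScW : IsUnit (Scᵀ * W * Sc)) (hSncW : IsUnit (Sncᵀ * W * Snc))
    (Wc Wnc : Matrix (Fin n) (Fin n) ℝ)
    (hWc : Wc = W - W * Snc * (Sncᵀ * W * Snc)⁻¹ * Sncᵀ * W)
    (hWnc : Wnc = W - W * Sc * (Scᵀ * W * Sc)⁻¹ * Scᵀ * W)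
    (hScWc : IsUnit (Scᵀ * Wc * Sc)) (hSncWnc : IsUnit (Sncᵀ * Wnc * Snc))
    (τc : Fin k → ℝ) (τnc : Fin m → ℝ) :
    let τ := (Wc * Sc * (Scᵀ * Wc * Sc)⁻¹).mulVec τc
             + (Wnc * Snc * (Sncᵀ * Wnc * Snc)⁻¹).mulVec τnc
    Scᵀ.mulVec τ = τc ∧ Sncᵀ.mulVec τ = τnc := by
  intro τ
  have hScW' : (Scᵀ * W * Sc) * (Scᵀ * W * Sc)⁻¹ = 1 :=
    mul_nonsing_inv _ ((isUnit_iff_isUnit_det _).mp hScW)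
  have hSncW' : (Sncᵀ * W * Snc) * (Sncᵀ * W * Snc)⁻¹ = 1 :=
    mul_nonsing_inv _ ((isUnit_iff_isUnit_det _).mp hSncW)
  have hScWnc : Scᵀ * Wnc = 0 := by
    have : Scᵀ * (W * Sc * (Scᵀ * W * Sc)⁻¹ * Scᵀ * W)
        = (Scᵀ * W * Sc) * (Scᵀ * W * Sc)⁻¹ * (Scᵀ * W) := by
      simp only [Matrix.mul_assoc]
    rw [hWnc, Matrix.mul_sub, this, hScW', Matrix.one_mul, sub_self]
  have hSncWc : Sncᵀ * Wc = 0 := by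
    have : Sncᵀ * (W * Snc * (Sncᵀ * W * Snc)⁻¹ * Sncᵀ * W)
        = (Sncᵀ * W * Snc) * (Sncᵀ * W * Snc)⁻¹ * (Sncᵀ * W) := by
      simp only [Matrix.mul_assoc]
    rw [hWc, Matrix.mul_sub, this, hSncW', Matrix.one_mul, sub_self]
  have hScWc' : (Scᵀ * Wc * Sc) * (Scᵀ * Wc * Sc)⁻¹ = 1 :=
    mul_nonsing_inv _ ((isUnit_iff_isUnit_det _).mp hScWc)
  have hSncWnc' : (Sncᵀ * Wnc * Snc) * (Sncᵀ * Wnc * Snc)⁻¹ = 1 :=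
    mul_nonsing_inv _ ((isUnit_iff_isUnit_det _).mp hSncWnc)
  constructor
  · show Scᵀ.mulVec _ = τc
    rw [Matrix.mulVec_add, Matrix.mulVec_mulVec, Matrix.mulVec_mulVec]
    have h1 : Scᵀ * (Wc * Sc * (Scᵀ * Wc * Sc)⁻¹) = 1 := by
      rw [← Matrix.mul_assoc, ← Matrix.mul_assoc, hScWc']
    have h2 : Scᵀ * (Wnc * Snc * (Sncᵀ * Wnc * Snc)⁻¹) = 0 := by
      rw [← Matrix.mul_assoc, ← Matrix.mul_assoc, hScWnc, Matrix.zero_mul, Matrix.zero_mul]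
    rw [h1, h2]
    simp
  · show Sncᵀ.mulVec _ = τnc
    rw [Matrix.mulVec_add, Matrix.mulVec_mulVec, Matrix.mulVec_mulVec]
    have h1 : Sncᵀ * (Wnc * Snc * (Sncᵀ * Wnc * Snc)⁻¹) = 1 := by
      rw [← Matrix.mul_assoc, ← Matrix.mul_assoc, hSncWnc']
    have h2 : Sncᵀ * (Wc * Sc * (Scᵀ * Wc * Sc)⁻¹) = 0 := by
      rw [← Matrix.mul_assoc, ← Matrix.mul_assoc, hSncWc, Matrix.zero_mul, Matrix.zero_mul]
    rw [h1, h2]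
    simp
end

section
/- Let W be symmetric positive definite, S_c, S_nc full column-rank matrices, W_nc = W - α_c · W S_c (S_cᵀ W S_c)⁻¹ S_cᵀ W with α_c ∈ {0,1}, and assume S_ncᵀ W_nc S_nc invertible. Then for τ = W_nc S_nc (S_ncᵀ W_nc S_nc)⁻¹ τ_nc one has S_cᵀ τ = (1 - α_c) · S_cᵀ W S_nc (S_ncᵀ W S_nc)⁻¹ τ_nc, i.e., the cross-coupling from the non-contact control to the contact subsystem is exactly scaled by (1 - α_c). -/
open Matrix

theorem cross_coupling_scaled_by_one_sub_alpha {n k m : ℕ}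
    (W : Matrix (Fin n) (Fin n) ℝ)
    (Sc : Matrix (Fin n) (Fin k) ℝ) (Snc : Matrix (Fin n) (Fin m) ℝ)
    (hW : W.PosDef) (hWsym : W.IsSymm)
    (hScW : IsUnit (Scᵀ * W * Sc)) (hSncW : IsUnit (Sncᵀ * W * Snc))
    (αc : ℝ) (hα : αc ∈ ({0, 1} : Set ℝ))
    (Wnc : Matrix (Fin n) (Fin n) ℝ)
    (hWnc : Wnc = W - αc • (W * Sc * (Scᵀ * W * Sc)⁻¹ * Scᵀ * W))
    (hSncWnc : IsUnit (Sncᵀ * Wnc * Snc))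
    (τnc : Fin m → ℝ) :
    Scᵀ.mulVec ((Wnc * Snc * (Sncᵀ * Wnc * Snc)⁻¹).mulVec τnc)
      = (1 - αc) • ((Scᵀ * W * Snc * (Sncᵀ * W * Snc)⁻¹).mulVec τnc) := by

  rcases hα with h0 | h1
  · subst h0
    subst hWnc
    simp [Matrix.mulVec_mulVec, Matrix.mul_assoc]
  · simp only [Set.mem_singleton_iff] at h1
    subst h1
    have hScWnc : Scᵀ * Wnc = 0 := by
      rw [hWnc, one_smul, Matrix.mul_sub]
      have : Scᵀ * (W * Sc * (Scᵀ * W * Sc)⁻¹ * Scᵀ * W)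
          = (Scᵀ * W * Sc) * (Scᵀ * W * Sc)⁻¹ * (Scᵀ * W) := by
        simp only [Matrix.mul_assoc]
      rw [this, Matrix.mul_nonsing_inv _ ((Matrix.isUnit_iff_isUnit_det _).mp hScW),
        Matrix.one_mul, sub_self]
    have key : Scᵀ * (Wnc * Snc * (Sncᵀ * Wnc * Snc)⁻¹) = 0 := by
      rw [show Scᵀ * (Wnc * Snc * (Sncᵀ * Wnc * Snc)⁻¹)
          = (Scᵀ * Wnc) * (Snc * (Sncᵀ * Wnc * Snc)⁻¹) by
        simp only [Matrix.mul_assoc], hScWnc, Matrix.zero_mul]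
    rw [Matrix.mulVec_mulVec, key]
    simp
end
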